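/- Let n ≥ 1, μ_1,…,μ_n ∈ ℝ, σ_1,…,σ_n > 0, and let s, s' ∈ {−1,+1}^n both satisfy ∏_i s_i = +1 and ∏_i s'_i = +1. Define Ψ(u) := Σ_{i=1}^n ( u_i²/(2σ_i²) − μ_i u_i/σ_i² ), L_s := Σ_{i=1}^n s_i μ_i/σ_i, and m_s(x) := inf{ Ψ(u) : ∏_{i=1}^n u_i = x, s_i u_i > 0 for all i }. If L_s < L_{s'}, then m_s(x) − m_{s'}(x) → +∞ as x → ∞; equivalently, exp(−m_s(x))/exp(−m_{s'}(x)) → 0. -/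

import Mathlib

open Finset Filter
open scoped Topology

lemma sum_q_ge (n : ℕ) (q : Fin n → ℝ) (hq : ∀ i, 0 < q i) (hp : ∏ i, q i = 1) :
    (n : ℝ) ≤ ∑ i, q i := by
  have h1 : ∀ i ∈ Finset.univ, Real.log (q i) ≤ q i - 1 :=
    fun i _ => Real.log_le_sub_one_of_pos (hq i)
  have h2 : ∑ i, Real.log (q i) = 0 := by
    rw [← Real.log_prod (fun i _ => (hq i).ne'), hp, Real.log_one]
  have h3 := Finset.sum_le_sum h1
  rw [h2, Finset.sum_sub_distrib, Finset.sum_const, Finset.card_univ] at h3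
  simp at h3
  linarith

lemma psi_lower (n : ℕ) (σ b : Fin n → ℝ) (hσ : ∀ i, 0 < σ i) (r : ℝ) (hr : 0 < r)
    (t : Fin n → ℝ) (ht : ∀ i, 0 < t i) (hp : ∏ i, t i = r ^ n * ∏ i, σ i) :
    (n : ℝ) * r ^ 2 / 2 - r * ∑ i, b i - (∑ i, b i ^ 2) / 2
      ≤ ∑ i, (t i ^ 2 / (2 * σ i ^ 2) - b i * t i / σ i) := by
  have hq : ∀ i, 0 < t i / (σ i * r) := fun i => div_pos (ht i) (mul_pos (hσ i) hr)
  have hqp : ∏ i, t i / (σ i * r) = 1 := by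
    rw [Finset.prod_div_distrib, Finset.prod_mul_distrib, Finset.prod_const, hp]
    have : (0:ℝ) < ∏ i, σ i := Finset.prod_pos (fun i _ => hσ i)
    field_simp
    rw [Finset.card_univ, Fintype.card_fin]
  have hsum := sum_q_ge n _ hq hqp
  have hts : (n : ℝ) * r ≤ ∑ i, t i / σ i := by
    have heq : ∑ i, t i / σ i = r * ∑ i, t i / (σ i * r) := by
      rw [Finset.mul_sum]
      refine Finset.sum_congr rfl fun i _ => ?_
      have hσi : (σ i) ≠ 0 := (hσ i).ne'
      field_simp
    rw [heq]
    have := mul_le_mul_of_nonneg_left hsum hr.le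
    linarith
  have hpt : ∀ i ∈ Finset.univ, r * (t i / σ i) - r ^ 2 / 2 - r * b i - b i ^ 2 / 2
      ≤ t i ^ 2 / (2 * σ i ^ 2) - b i * t i / σ i := by
    intro i _
    have hσi : (σ i) ≠ 0 := (hσ i).ne'
    have e1 : t i ^ 2 / (2 * σ i ^ 2) = (t i / σ i) ^ 2 / 2 := by
      rw [div_pow, div_div, mul_comm]
    have e2 : b i * t i / σ i = b i * (t i / σ i) := by ring
    rw [e1, e2]
    nlinarith [sq_nonneg (t i / σ i - r - b i)]
  have hsl := Finset.sum_le_sum hpt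
  have hL : ∑ i, (r * (t i / σ i) - r ^ 2 / 2 - r * b i - b i ^ 2 / 2)
      = r * (∑ i, t i / σ i) - (n : ℝ) * (r ^ 2 / 2) - r * ∑ i, b i
        - (∑ i, b i ^ 2) / 2 := by
    simp only [Finset.sum_sub_distrib, ← Finset.mul_sum, Finset.sum_const,
      Finset.card_univ, Fintype.card_fin, nsmul_eq_mul, Finset.sum_div]
    try ring
  rw [hL] at hsl
  nlinarith [mul_le_mul_of_nonneg_left hts hr.le]

/-- The quadratic exponent from the joint Gaussian density. -/
noncomputable def PsiExp {n : ℕ} (μ σ : Fin n → ℝ) (u : Fin n → ℝ) : ℝ :=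
  ∑ i, (u i ^ 2 / (2 * σ i ^ 2) - μ i * u i / σ i ^ 2)

/-- The constrained minimum of `Ψ` over the orthant piece of `{∏ u_i = x}` with sign
pattern `s`. -/
noncomputable def saddleMin {n : ℕ} (μ σ : Fin n → ℝ) (s : Fin n → ℝ) (x : ℝ) : ℝ :=
  sInf {v : ℝ | ∃ u : Fin n → ℝ,
    (∏ i, u i) = x ∧ (∀ i, 0 < s i * u i) ∧ v = PsiExp μ σ u}

/-- Every element of the constrained set is at least `n r²/2 - r L_s - C`. -/
lemma mem_ge (n : ℕ) (μ σ s : Fin n → ℝ) (hσ : ∀ i, 0 < σ i)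
    (hs : ∀ i, s i = 1 ∨ s i = -1) (hprod : ∏ i, s i = 1) (r x : ℝ) (hr : 0 < r)
    (hx : r ^ n * ∏ i, σ i = x) :
    ∀ v ∈ {v : ℝ | ∃ u : Fin n → ℝ,
      (∏ i, u i) = x ∧ (∀ i, 0 < s i * u i) ∧ v = PsiExp μ σ u},
      (n : ℝ) * r ^ 2 / 2 - r * ∑ i, s i * (μ i / σ i) - (∑ i, (μ i / σ i) ^ 2) / 2
        ≤ v := by
  rintro v ⟨u, hu, hpos, rfl⟩
  set t : Fin n → ℝ := fun i => s i * u i with htdef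
  have ht : ∀ i, 0 < t i := hpos
  have htp : ∏ i, t i = r ^ n * ∏ i, σ i := by
    rw [htdef]
    rw [Finset.prod_mul_distrib, hprod, one_mul, hu, hx]
  have hb : PsiExp μ σ u
      = ∑ i, (t i ^ 2 / (2 * σ i ^ 2) - (s i * (μ i / σ i)) * t i / σ i) := by
    unfold PsiExp
    refine Finset.sum_congr rfl fun i _ => ?_
    have hσi : (σ i) ≠ 0 := (hσ i).ne'
    rcases hs i with h | h <;> simp only [htdef, h] <;> field_simp <;> ring
  rw [hb]
  have key := psi_lower n σ (fun i => s i * (μ i / σ i)) hσ r hr t ht htp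
  have hsq : ∑ i, (s i * (μ i / σ i)) ^ 2 = ∑ i, (μ i / σ i) ^ 2 := by
    refine Finset.sum_congr rfl fun i _ => ?_
    rcases hs i with h | h <;> rw [h] <;> ring
  rw [hsq] at key
  exact key

/-- The canonical point gives the value `n r²/2 - r L_s` as an element. -/
lemma mem_candidate (n : ℕ) (μ σ s : Fin n → ℝ) (hσ : ∀ i, 0 < σ i)
    (hs : ∀ i, s i = 1 ∨ s i = -1) (hprod : ∏ i, s i = 1) (r x : ℝ) (hr : 0 < r)
    (hx : r ^ n * ∏ i, σ i = x) :
    (n : ℝ) * r ^ 2 / 2 - r * ∑ i, s i * (μ i / σ i) ∈ {v : ℝ | ∃ u : Fin n → ℝ,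
      (∏ i, u i) = x ∧ (∀ i, 0 < s i * u i) ∧ v = PsiExp μ σ u} := by
  refine ⟨fun i => s i * (σ i * r), ?_, ?_, ?_⟩
  · rw [Finset.prod_mul_distrib, hprod, one_mul, Finset.prod_mul_distrib,
      Finset.prod_const, Finset.card_univ, Fintype.card_fin, mul_comm, hx]
  · intro i
    have : s i * (s i * (σ i * r)) = σ i * r := by
      rcases hs i with h | h <;> rw [h] <;> ring
    rw [this]
    exact mul_pos (hσ i) hr
  · unfold PsiExp
    have : ∀ i ∈ Finset.univ, ((s i * (σ i * r)) ^ 2 / (2 * σ i ^ 2)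
        - μ i * (s i * (σ i * r)) / σ i ^ 2)
        = r ^ 2 / 2 - (s i * (μ i / σ i)) * r := by
      intro i _
      have hσi : (σ i) ≠ 0 := (hσ i).ne'
      rcases hs i with h | h <;> rw [h] <;> field_simp <;> ring
    rw [Finset.sum_congr rfl this, Finset.sum_sub_distrib, Finset.sum_const,
      Finset.card_univ, Fintype.card_fin, nsmul_eq_mul, ← Finset.sum_mul]
    ring

/-- Sign patterns with strictly smaller `L_s` are exponentially negligible:
if `L_s < L_{s'}` then `m_s(x) - m_{s'}(x) → ∞`, equivalently
`exp(-m_s(x))/exp(-m_{s'}(x)) → 0`. -/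
theorem nonmaximal_sign_pattern_negligible (n : ℕ) (hn : 1 ≤ n) (μ σ : Fin n → ℝ)
    (hσ : ∀ i, 0 < σ i)
    (s s' : Fin n → ℝ) (hs : ∀ i, s i = 1 ∨ s i = -1) (hs' : ∀ i, s' i = 1 ∨ s' i = -1)
    (hprod : ∏ i, s i = 1) (hprod' : ∏ i, s' i = 1)
    (hL : ∑ i, s i * (μ i / σ i) < ∑ i, s' i * (μ i / σ i)) :
    Tendsto (fun x => saddleMin μ σ s x - saddleMin μ σ s' x) atTop atTop
    ∧ Tendsto (fun x => Real.exp (-saddleMin μ σ s x) / Real.exp (-saddleMin μ σ s' x))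
        atTop (𝓝 0) := by
  have hPpos : (0:ℝ) < ∏ i, σ i := Finset.prod_pos fun i _ => hσ i
  have hn0 : (n : ℝ) ≠ 0 := by
    have : 0 < n := hn
    positivity
  have key : ∀ᶠ x in atTop,
      (∑ i, s' i * (μ i / σ i) - ∑ i, s i * (μ i / σ i))
          * (x / ∏ i, σ i) ^ ((n : ℝ)⁻¹) - (∑ i, (μ i / σ i) ^ 2) / 2
        ≤ saddleMin μ σ s x - saddleMin μ σ s' x := by
    filter_upwards [eventually_gt_atTop 0] with x hx
    set r := (x / ∏ i, σ i) ^ ((n : ℝ)⁻¹) with hrdef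
    have hxP : 0 < x / ∏ i, σ i := div_pos hx hPpos
    have hr : 0 < r := Real.rpow_pos_of_pos hxP _
    have hrn : r ^ n * ∏ i, σ i = x := by
      rw [hrdef, ← Real.rpow_natCast ((x / ∏ i, σ i) ^ ((n:ℝ)⁻¹)) n,
        ← Real.rpow_mul hxP.le, inv_mul_cancel₀ hn0, Real.rpow_one]
      field_simp
    have h1 : (n:ℝ) * r ^ 2 / 2 - r * ∑ i, s i * (μ i / σ i)
        - (∑ i, (μ i / σ i) ^ 2) / 2 ≤ saddleMin μ σ s x :=
      le_csInf ⟨_, mem_candidate n μ σ s hσ hs hprod r x hr hrn⟩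
        (mem_ge n μ σ s hσ hs hprod r x hr hrn)
    have h2 : saddleMin μ σ s' x ≤ (n:ℝ) * r ^ 2 / 2 - r * ∑ i, s' i * (μ i / σ i) :=
      csInf_le ⟨_, mem_ge n μ σ s' hσ hs' hprod' r x hr hrn⟩
        (mem_candidate n μ σ s' hσ hs' hprod' r x hr hrn)
    have hring : (∑ i, s' i * (μ i / σ i) - ∑ i, s i * (μ i / σ i)) * r
        = r * ∑ i, s' i * (μ i / σ i) - r * ∑ i, s i * (μ i / σ i) := by ring
    linarith
  have hg : Tendsto (fun x : ℝ =>
      (∑ i, s' i * (μ i / σ i) - ∑ i, s i * (μ i / σ i))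
          * (x / ∏ i, σ i) ^ ((n : ℝ)⁻¹) - (∑ i, (μ i / σ i) ^ 2) / 2)
      atTop atTop := by
    have h0 : Tendsto (fun x : ℝ => x / ∏ i, σ i) atTop atTop :=
      tendsto_id.atTop_div_const hPpos
    have h1 : Tendsto (fun x : ℝ => (x / ∏ i, σ i) ^ ((n : ℝ)⁻¹)) atTop atTop :=
      (tendsto_rpow_atTop (by positivity)).comp h0
    have h2 := h1.const_mul_atTop (sub_pos.mpr hL)
    simpa [sub_eq_add_neg] using
      tendsto_atTop_add_const_right atTop (-((∑ i, (μ i / σ i) ^ 2) / 2)) h2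
  have hfin := tendsto_atTop_mono' atTop key hg
  refine ⟨hfin, ?_⟩
  have heq : (fun x => Real.exp (-saddleMin μ σ s x) / Real.exp (-saddleMin μ σ s' x))
      = fun x => Real.exp (-(saddleMin μ σ s x - saddleMin μ σ s' x)) := by
    funext x
    rw [← Real.exp_sub]
    ring_nf
  rw [heq]
  exact Real.tendsto_exp_atBot.comp (tendsto_neg_atTop_atBot.comp hfin)
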